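/- Let K be a field of characteristic zero, let L ∈ K⟦X⟧ have nonzero constant coefficient and satisfy coeff_j L = 0 whenever 4 does not divide j, and let w ∈ K⟦X⟧ have constant coefficient 0 and satisfy w = X · (L ∘ w). Then: (i) coeff_n w = 0 unless n ≡ 1 (mod 4); and (ii) coeff_n((L ∘ w)^(-2)) = 0 unless 4 divides n. -/

import Mathlib

open PowerSeries

/-- Substitution (composition) `f ∘ w` of a formal power series `w` with zero
constant term into a formal power series `f`. -/
noncomputable def PowerSeries.substComp {K : Type*} [CommRing K]
    (w f : PowerSeries K) : PowerSeries K :=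
  PowerSeries.mk fun n =>
    ∑ j ∈ Finset.range (n + 1), PowerSeries.coeff j f * PowerSeries.coeff n (w ^ j)

private lemma pow_supp_aux {K : Type*} [Field K] (w : PowerSeries K) :
    ∀ j m : ℕ, (∀ k ≤ m, PowerSeries.coeff k w ≠ 0 → k % 4 = 1) →
      PowerSeries.coeff m (w ^ j) ≠ 0 → m % 4 = j % 4 := by
  intro j
  induction j with
  | zero =>
    intro m _ hne
    rw [pow_zero, PowerSeries.coeff_one] at hne
    have : m = 0 := by by_contra h; simp [h] at hne
    simp [this]
  | succ j ih =>
    intro m hsupp hne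
    rw [pow_succ, mul_comm, PowerSeries.coeff_mul] at hne
    obtain ⟨p, hp, hpne⟩ := Finset.exists_ne_zero_of_sum_ne_zero hne
    rw [Finset.HasAntidiagonal.mem_antidiagonal] at hp
    have h1 : PowerSeries.coeff p.1 w ≠ 0 := fun h => hpne (by simp [h])
    have h2 : PowerSeries.coeff p.2 (w ^ j) ≠ 0 := fun h => hpne (by simp [h])
    have hp1 : p.1 % 4 = 1 := hsupp p.1 (by omega) h1
    have hp2 : p.2 % 4 = j % 4 := ih p.2 (fun k hk => hsupp k (by omega)) h2
    omega

/-- Support property of the double-scaled saddle point: if `L` is a power series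
in `X⁴` with nonzero constant term and `w = X · (L ∘ w)` with `w(0) = 0`, then
`w` is supported on exponents `≡ 1 (mod 4)` and `(L ∘ w)⁻²` is supported on
exponents divisible by `4`. -/
theorem support_mod_four {K : Type*} [Field K] [CharZero K]
    (L w : PowerSeries K)
    (hL : PowerSeries.constantCoeff L ≠ 0)
    (hLsupp : ∀ j : ℕ, ¬ (4 ∣ j) → PowerSeries.coeff j L = 0)
    (hw0 : PowerSeries.constantCoeff w = 0)
    (hw : w = PowerSeries.X * PowerSeries.substComp w L) :
    (∀ n : ℕ, ¬ (n % 4 = 1) → PowerSeries.coeff n w = 0) ∧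
      ∀ n : ℕ, ¬ (4 ∣ n) →
        PowerSeries.coeff n ((PowerSeries.substComp w L)⁻¹ ^ 2) = 0 := by
  set U := PowerSeries.substComp w L with hU
  -- Part (i)
  have key : ∀ n : ℕ, PowerSeries.coeff n w ≠ 0 → n % 4 = 1 := by
    intro n
    induction n using Nat.strong_induction_on with
    | _ n ih =>
      intro hne
      match n with
      | 0 => exact absurd (by simpa using hw0) hne
      | (m+1) =>
        rw [hw, PowerSeries.coeff_succ_X_mul] at hne
        rw [hU, PowerSeries.substComp, PowerSeries.coeff_mk] at hne
        obtain ⟨j, hj, hjne⟩ := Finset.exists_ne_zero_of_sum_ne_zero hne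
        have hLj : PowerSeries.coeff j L ≠ 0 := fun h => hjne (by simp [h])
        have hjd : 4 ∣ j := by by_contra h; exact hLj (hLsupp j h)
        have hwj : PowerSeries.coeff m (w ^ j) ≠ 0 := fun h => hjne (by simp [h])
        have hm : m % 4 = j % 4 := by
          refine pow_supp_aux w j m (fun k hk hkne => ?_) hwj
          have h' := hw ▸ hkne
          exact ih k (by omega) hkne
        omega
  have key' : ∀ n : ℕ, ¬ (n % 4 = 1) → PowerSeries.coeff n w = 0 := by
    intro n hn; by_contra h; exact hn (key n h)
  refine ⟨key', ?_⟩
  -- support of U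
  have Usupp : ∀ n : ℕ, PowerSeries.coeff n U ≠ 0 → n % 4 = 0 := by
    intro n hne
    rw [hU, PowerSeries.substComp, PowerSeries.coeff_mk] at hne
    obtain ⟨j, hj, hjne⟩ := Finset.exists_ne_zero_of_sum_ne_zero hne
    have hLj : PowerSeries.coeff j L ≠ 0 := fun h => hjne (by simp [h])
    have hjd : 4 ∣ j := by by_contra h; exact hLj (hLsupp j h)
    have hwj : PowerSeries.coeff n (w ^ j) ≠ 0 := fun h => hjne (by simp [h])
    have := pow_supp_aux w j n (fun k _ => key k) hwj
    omega
  -- constant coeff of U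
  have U0 : PowerSeries.constantCoeff U ≠ 0 := by
    have : PowerSeries.constantCoeff U = PowerSeries.constantCoeff L := by
      rw [← PowerSeries.coeff_zero_eq_constantCoeff, hU, PowerSeries.substComp,
        PowerSeries.coeff_mk]
      simp
    rw [this]; exact hL
  -- support of U⁻¹
  have Uinv : ∀ n : ℕ, PowerSeries.coeff n U⁻¹ ≠ 0 → n % 4 = 0 := by
    intro n
    induction n using Nat.strong_induction_on with
    | _ n ih =>
      intro hne
      by_contra hn4
      have hn0 : n ≠ 0 := by omega
      have h1 : U * U⁻¹ = 1 := PowerSeries.mul_inv_cancel U U0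
      have h2 : PowerSeries.coeff n (U * U⁻¹) = 0 := by
        rw [h1, PowerSeries.coeff_one]; simp [hn0]
      rw [PowerSeries.coeff_mul] at h2
      have hmem : ((0 : ℕ), n) ∈ Finset.HasAntidiagonal.antidiagonal n := by
        rw [Finset.HasAntidiagonal.mem_antidiagonal]; simp
      rw [Finset.sum_eq_single_of_mem _ hmem ?_] at h2
      · simp only [PowerSeries.coeff_zero_eq_constantCoeff] at h2
        have := mul_eq_zero.mp h2
        rcases this with h | h
        · exact U0 h
        · -- coeff n U⁻¹ = 0, so what? We assumed hne
          exact hne h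
      · intro b hb hbne
        rw [Finset.HasAntidiagonal.mem_antidiagonal] at hb
        by_contra hb0
        have hb1 : PowerSeries.coeff b.1 U ≠ 0 := fun h => hb0 (by simp [h])
        have hb2 : PowerSeries.coeff b.2 U⁻¹ ≠ 0 := fun h => hb0 (by simp [h])
        have hbn : b.2 < n := by
          rcases Nat.lt_or_ge b.2 n with h | h
          · exact h
          · have : b.1 = 0 ∧ b.2 = n := by omega
            exact absurd (Prod.ext this.1 this.2) hbne
        have e1 := Usupp b.1 hb1
        have e2 := ih b.2 hbn hb2
        omega
  -- final
  intro n hn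
  rw [sq, PowerSeries.coeff_mul]
  apply Finset.sum_eq_zero
  intro p hp
  rw [Finset.HasAntidiagonal.mem_antidiagonal] at hp
  by_contra h
  have h1 : PowerSeries.coeff p.1 U⁻¹ ≠ 0 := fun hh => h (by simp [hh])
  have h2 : PowerSeries.coeff p.2 U⁻¹ ≠ 0 := fun hh => h (by simp [hh])
  have e1 := Uinv p.1 h1
  have e2 := Uinv p.2 h2
  omega
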